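/- For each real t with 0 < t < 1, the series ∑_{n=0}^∞ (−1)^{n(n+1)/2} t^{(2n+1)²} is positive. -/

import Mathlib

set_option maxHeartbeats 1600000

noncomputable section Theta1Aux

/-- sign character `(-1)^(n(n+1)/2)` for `n : ℤ` (integer power of `-1`). -/
def chiZ (n : ℤ) : ℝ := (-1 : ℝ) ^ (n * (n + 1) / 2)

/-- the exponent `(2n+1)^2` as a natural number. -/
def eE (n : ℤ) : ℕ := (2 * n + 1).natAbs ^ 2

def fS (x : ℝ) : ℝ := ∑' n : ℕ, (-1 : ℝ) ^ (n * (n + 1) / 2) * x ^ ((2 * n + 1) ^ 2)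

def PhiT (x : ℝ) : ℝ := ∑' n : ℤ, x ^ (n.natAbs ^ 2)

def GT (x : ℝ) : ℝ := ∑' n : ℤ, x ^ eE n

def FT (x : ℝ) : ℝ := ∑' n : ℤ, chiZ n * x ^ eE n

lemma chiZ_abs (n : ℤ) : |chiZ n| = 1 := by
  unfold chiZ
  rcases Int.even_or_odd (n * (n + 1) / 2) with h | h
  · rw [h.neg_one_zpow]; norm_num
  · rw [h.neg_one_zpow]; norm_num

/-- geometric over ℤ -/
lemma summable_geom_int {r : ℝ} (h0 : 0 ≤ r) (h1 : r < 1) :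
    Summable fun n : ℤ => r ^ n.natAbs := by
  apply Summable.of_nat_of_neg_add_one
  · simpa using summable_geometric_of_lt_one h0 h1
  · have : ∀ n : ℕ, ((-(n + 1) : ℤ)).natAbs = n + 1 := by intro n; omega
    simp only [this]
    exact (summable_geometric_of_lt_one h0 h1).comp_injective (add_left_injective 1)

/-- Master summability-in-norm lemma. -/
lemma summable_norm_aux {x : ℝ} (hx : |x| < 1) (c : ℤ → ℝ) (hc : ∀ n, |c n| = 1)
    (e : ℤ → ℕ) (he : ∀ n, n.natAbs ≤ e n) :
    Summable fun n : ℤ => ‖c n * x ^ e n‖ := by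
  have h0 : (0:ℝ) ≤ |x| := abs_nonneg x
  refine Summable.of_nonneg_of_le (fun n => norm_nonneg _) (fun n => ?_)
    (summable_geom_int h0 hx)
  rw [Real.norm_eq_abs, abs_mul, hc n, one_mul, abs_pow]
  exact pow_le_pow_of_le_one h0 hx.le (he n)

lemma natAbs_le_eE (n : ℤ) : n.natAbs ≤ eE n := by
  unfold eE
  have h1 : n.natAbs ≤ (2 * n + 1).natAbs := by omega
  calc n.natAbs ≤ (2*n+1).natAbs := h1
    _ ≤ (2*n+1).natAbs ^ 2 := Nat.le_self_pow two_ne_zero _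

lemma natAbs_le_sq (n : ℤ) : n.natAbs ≤ n.natAbs ^ 2 := Nat.le_self_pow two_ne_zero _

lemma summable_norm_PhiT {x : ℝ} (hx : |x| < 1) :
    Summable fun n : ℤ => ‖x ^ (n.natAbs ^ 2)‖ := by
  have := summable_norm_aux hx (fun _ => 1) (by simp) (fun n => n.natAbs ^ 2) natAbs_le_sq
  simpa using this

lemma summable_norm_GT {x : ℝ} (hx : |x| < 1) :
    Summable fun n : ℤ => ‖x ^ eE n‖ := by
  have := summable_norm_aux hx (fun _ => 1) (by simp) eE natAbs_le_eE
  simpa using this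

lemma summable_norm_FT {x : ℝ} (hx : |x| < 1) :
    Summable fun n : ℤ => ‖chiZ n * x ^ eE n‖ :=
  summable_norm_aux hx chiZ chiZ_abs eE natAbs_le_eE

lemma summable_PhiT {x : ℝ} (hx : |x| < 1) :
    Summable fun n : ℤ => x ^ (n.natAbs ^ 2) :=
  (summable_norm_PhiT hx).of_norm

lemma summable_GT {x : ℝ} (hx : |x| < 1) :
    Summable fun n : ℤ => x ^ eE n :=
  (summable_norm_GT hx).of_norm

lemma summable_FT {x : ℝ} (hx : |x| < 1) :
    Summable fun n : ℤ => chiZ n * x ^ eE n :=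
  (summable_norm_FT hx).of_norm


-- division helper
lemma Tadd_eq (a b s : ℤ) (h : a * (a + 1) + b * (b + 1) = 2 * s) :
    a * (a + 1) / 2 + b * (b + 1) / 2 = s := by
  obtain ⟨u, hu⟩ := Int.even_mul_succ_self a
  obtain ⟨v, hv⟩ := Int.even_mul_succ_self b
  rw [hu, hv] at h ⊢
  omega

lemma neg_one_zpow_even {k : ℤ} (h : Even k) : (-1 : ℝ) ^ k = 1 := h.neg_one_zpow

lemma neg_one_zpow_sq (k : ℤ) : (-1 : ℝ) ^ (k * k) = (-1 : ℝ) ^ k := by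
  have h : k * k = (k - 1) * ((k - 1) + 1) + k := by ring
  rw [h, zpow_add₀ (by norm_num : (-1:ℝ) ≠ 0), neg_one_zpow_even (Int.even_mul_succ_self (k-1)),
    one_mul]

lemma chiZ_mul (p q : ℤ) : chiZ p * chiZ q = (-1 : ℝ) ^ (p * (p+1)/2 + q * (q+1)/2) := by
  rw [zpow_add₀ (by norm_num : (-1:ℝ) ≠ 0)]; rfl

lemma neg_one_zpow_natAbs_sq (k : ℤ) : ((-1:ℝ)) ^ (k.natAbs ^ 2) = (-1 : ℝ) ^ (k * k) := by
  rw [← zpow_natCast (-1 : ℝ) (k.natAbs ^ 2)]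
  congr 1
  push_cast
  rw [sq, abs_mul_abs_self]

-- the sign lemma for the same-parity part of F²
lemma chiZ_mul_same (c β : ℤ) : chiZ (c + β) * chiZ (c - β) = (-1 : ℝ) ^ (β.natAbs ^ 2) := by
  rw [chiZ_mul]
  have hT : (c+β) * ((c+β)+1)/2 + (c-β)*((c-β)+1)/2 = c*(c+1) + β*β :=
    Tadd_eq _ _ _ (by ring)
  rw [hT, zpow_add₀ (by norm_num : (-1:ℝ) ≠ 0),
    neg_one_zpow_even (Int.even_mul_succ_self c), one_mul, neg_one_zpow_natAbs_sq]

-- the sign lemma for the opposite-parity part of F²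
lemma chiZ_mul_opp (α d : ℤ) : chiZ (α + d) * chiZ (α - d - 1) = (-1 : ℝ) ^ (α.natAbs ^ 2) := by
  rw [chiZ_mul]
  have hT : (α+d) * ((α+d)+1)/2 + (α-d-1)*((α-d-1)+1)/2 = α*α + d*(d+1) :=
    Tadd_eq _ _ _ (by ring)
  rw [hT, zpow_add₀ (by norm_num : (-1:ℝ) ≠ 0),
    neg_one_zpow_even (Int.even_mul_succ_self d), mul_one, neg_one_zpow_natAbs_sq]

-- natural-number exponent arithmetic via casting
lemma natAbs_sq_eq (a b : ℤ) (m n : ℕ) (h : (m:ℤ) = a ^ 2 + b ^ 2)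
    (h' : (n:ℤ) = a ^ 2 + b ^ 2) : m = n := by omega


lemma key_B (a b : ℤ) : (a+b).natAbs^2 + (a-b).natAbs^2 = 2*a.natAbs^2 + 2*b.natAbs^2 := by
  have h : (((a+b).natAbs^2 + (a-b).natAbs^2 : ℕ) : ℤ)
      = ((2*a.natAbs^2 + 2*b.natAbs^2 : ℕ) : ℤ) := by
    push_cast; simp only [sq_abs]; ring
  exact_mod_cast h

lemma key_F1 (c β : ℤ) : eE (c+β) + eE (c-β) = 2 * eE c + 8 * β.natAbs^2 := by
  unfold eE
  have h : (((2*(c+β)+1).natAbs^2 + (2*(c-β)+1).natAbs^2 : ℕ) : ℤ)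
      = ((2*(2*c+1).natAbs^2 + 8*β.natAbs^2 : ℕ) : ℤ) := by
    push_cast; simp only [sq_abs]; ring
  exact_mod_cast h

lemma key_F2 (α d : ℤ) : eE (α+d) + eE (α-d-1) = 8 * α.natAbs^2 + 2 * eE d := by
  unfold eE
  have h : (((2*(α+d)+1).natAbs^2 + (2*(α-d-1)+1).natAbs^2 : ℕ) : ℤ)
      = ((8*α.natAbs^2 + 2*(2*d+1).natAbs^2 : ℕ) : ℤ) := by
    push_cast; simp only [sq_abs]; ring
  exact_mod_cast h

lemma neg_one_pow_natAbs_sq_even {m : ℤ} (h : Even m) : (-1:ℝ)^(m.natAbs^2) = 1 :=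
  (Nat.even_pow.mpr ⟨Int.natAbs_even.mpr h, two_ne_zero⟩).neg_one_pow

lemma neg_one_pow_natAbs_sq_odd {m : ℤ} (h : Odd m) : (-1:ℝ)^(m.natAbs^2) = -1 :=
  ((Int.natAbs_odd.mpr h).pow).neg_one_pow

lemma B_sgn (a b : ℤ) :
    ((-1:ℝ)) ^ ((a-b).natAbs^2) = (-1:ℝ)^(a.natAbs^2) * (-1:ℝ)^(b.natAbs^2) := by
  rcases Int.even_or_odd a with ha | ha <;> rcases Int.even_or_odd b with hb | hb
  · rw [neg_one_pow_natAbs_sq_even (ha.sub hb), neg_one_pow_natAbs_sq_even ha,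
      neg_one_pow_natAbs_sq_even hb]; norm_num
  · rw [neg_one_pow_natAbs_sq_odd (ha.sub_odd hb), neg_one_pow_natAbs_sq_even ha,
      neg_one_pow_natAbs_sq_odd hb]; norm_num
  · rw [neg_one_pow_natAbs_sq_odd (ha.sub_even hb), neg_one_pow_natAbs_sq_odd ha,
      neg_one_pow_natAbs_sq_even hb]; norm_num
  · rw [neg_one_pow_natAbs_sq_even (ha.sub_odd hb), neg_one_pow_natAbs_sq_odd ha,
      neg_one_pow_natAbs_sq_odd hb]; norm_num

lemma B_inl (x : ℝ) (a b : ℤ) :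
    x ^ ((a+b).natAbs^2) * (-x) ^ ((a-b).natAbs^2)
      = (-(x^2)) ^ (a.natAbs^2) * (-(x^2)) ^ (b.natAbs^2) := by
  rw [neg_pow, neg_pow (x^2), neg_pow (x^2)]
  have hexp : x ^ ((a+b).natAbs^2) * x ^ ((a-b).natAbs^2)
      = (x^2) ^ (a.natAbs^2) * (x^2) ^ (b.natAbs^2) := by
    rw [← pow_add, key_B a b, ← pow_mul, ← pow_mul, ← pow_add]
  calc x ^ ((a+b).natAbs^2) * ((-1:ℝ) ^ ((a-b).natAbs^2) * x ^ ((a-b).natAbs^2))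
      = ((-1:ℝ)) ^ ((a-b).natAbs^2) * (x ^ ((a+b).natAbs^2) * x ^ ((a-b).natAbs^2)) := by ring
    _ = ((-1:ℝ)^(a.natAbs^2) * (-1:ℝ)^(b.natAbs^2))
          * ((x^2) ^ (a.natAbs^2) * (x^2) ^ (b.natAbs^2)) := by rw [hexp, B_sgn]
    _ = _ := by ring

lemma B_odd_swap (x : ℝ) {m n : ℤ} (h : ¬ Even (m + n)) :
    x ^ (n.natAbs^2) * (-x) ^ (m.natAbs^2) = -(x ^ (m.natAbs^2) * (-x) ^ (n.natAbs^2)) := by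
  rw [neg_pow x, neg_pow x]
  rcases Int.even_or_odd m with hm | hm <;> rcases Int.even_or_odd n with hn | hn
  · exact absurd (hm.add hn) h
  · rw [neg_one_pow_natAbs_sq_even hm, neg_one_pow_natAbs_sq_odd hn]; ring
  · rw [neg_one_pow_natAbs_sq_odd hm, neg_one_pow_natAbs_sq_even hn]; ring
  · exact absurd (hm.add_odd hn) h

lemma F2_inl (t : ℝ) (c β : ℤ) :
    (chiZ (c+β) * t ^ eE (c+β)) * (chiZ (c-β) * t ^ eE (c-β))
      = (t^2) ^ eE c * (-(t^8)) ^ (β.natAbs^2) := by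
  rw [neg_pow (t^8)]
  have hexp : t ^ eE (c+β) * t ^ eE (c-β) = (t^2) ^ eE c * (t^8) ^ (β.natAbs^2) := by
    rw [← pow_add, key_F1 c β, ← pow_mul, ← pow_mul, ← pow_add]
  calc (chiZ (c+β) * t ^ eE (c+β)) * (chiZ (c-β) * t ^ eE (c-β))
      = (chiZ (c+β) * chiZ (c-β)) * (t ^ eE (c+β) * t ^ eE (c-β)) := by ring
    _ = (-1:ℝ) ^ (β.natAbs^2) * ((t^2) ^ eE c * (t^8) ^ (β.natAbs^2)) := by
        rw [hexp, chiZ_mul_same]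
    _ = _ := by ring

lemma F2_inr (t : ℝ) (α d : ℤ) :
    (chiZ (α+d) * t ^ eE (α+d)) * (chiZ (α-d-1) * t ^ eE (α-d-1))
      = (-(t^8)) ^ (α.natAbs^2) * (t^2) ^ eE d := by
  rw [neg_pow (t^8)]
  have hexp : t ^ eE (α+d) * t ^ eE (α-d-1) = (t^8) ^ (α.natAbs^2) * (t^2) ^ eE d := by
    rw [← pow_add, key_F2 α d, ← pow_mul, ← pow_mul, ← pow_add]
  calc (chiZ (α+d) * t ^ eE (α+d)) * (chiZ (α-d-1) * t ^ eE (α-d-1))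
      = (chiZ (α+d) * chiZ (α-d-1)) * (t ^ eE (α+d) * t ^ eE (α-d-1)) := by ring
    _ = (-1:ℝ) ^ (α.natAbs^2) * ((t^8) ^ (α.natAbs^2) * (t^2) ^ eE d) := by
        rw [hexp, chiZ_mul_opp]
    _ = _ := by ring


def evenS : Set (ℤ × ℤ) := {p | Even (p.1 + p.2)}
def sameS : Set (ℤ × ℤ) := {p | Even (p.1 - p.2)}

def eB : ℤ × ℤ ≃ evenS where
  toFun q := ⟨(q.1 + q.2, q.1 - q.2), ⟨q.1, show (q.1+q.2)+(q.1-q.2) = q.1+q.1 by ring⟩⟩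
  invFun p := ((p.1.1 + p.1.2)/2, (p.1.1 - p.1.2)/2)
  left_inv q := by
    obtain ⟨a, b⟩ := q
    simp only []
    refine Prod.ext ?_ ?_ <;> simp <;> omega
  right_inv p := by
    obtain ⟨⟨m, n⟩, h⟩ := p
    obtain ⟨k, hk⟩ : Even (m + n) := h
    apply Subtype.ext
    refine Prod.ext ?_ ?_ <;> simp <;> omega

def swOdd : ↥(evenSᶜ) ≃ ↥(evenSᶜ) where
  toFun p := ⟨(p.1.2, p.1.1), by
    have := p.2
    simp only [Set.mem_compl_iff, evenS, Set.mem_setOf_eq] at this ⊢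
    rwa [add_comm]⟩
  invFun p := ⟨(p.1.2, p.1.1), by
    have := p.2
    simp only [Set.mem_compl_iff, evenS, Set.mem_setOf_eq] at this ⊢
    rwa [add_comm]⟩
  left_inv p := by apply Subtype.ext; rfl
  right_inv p := by apply Subtype.ext; rfl

def eF1 : ℤ × ℤ ≃ sameS where
  toFun q := ⟨(q.1 + q.2, q.1 - q.2), ⟨q.2, show (q.1+q.2)-(q.1-q.2) = q.2+q.2 by ring⟩⟩
  invFun p := ((p.1.1 + p.1.2)/2, (p.1.1 - p.1.2)/2)
  left_inv q := by
    obtain ⟨a, b⟩ := q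
    refine Prod.ext ?_ ?_ <;> simp <;> omega
  right_inv p := by
    obtain ⟨⟨m, n⟩, h⟩ := p
    obtain ⟨k, hk⟩ : Even (m - n) := h
    apply Subtype.ext
    refine Prod.ext ?_ ?_ <;> simp <;> omega

def eF2 : ℤ × ℤ ≃ ↥(sameSᶜ) where
  toFun q := ⟨(q.1 + q.2, q.1 - q.2 - 1), by
    simp only [Set.mem_compl_iff, sameS, Set.mem_setOf_eq]
    intro ⟨k, hk⟩
    omega⟩
  invFun p := ((p.1.1 + p.1.2 + 1)/2, (p.1.1 - p.1.2 - 1)/2)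
  left_inv q := by
    obtain ⟨a, b⟩ := q
    refine Prod.ext ?_ ?_ <;> simp <;> omega
  right_inv p := by
    obtain ⟨⟨m, n⟩, h⟩ := p
    simp only [Set.mem_compl_iff, sameS, Set.mem_setOf_eq] at h
    rw [Int.not_even_iff_odd] at h
    obtain ⟨k, hk⟩ := h
    apply Subtype.ext
    refine Prod.ext ?_ ?_ <;> simp <;> omega

lemma PhiB {x : ℝ} (hx : |x| < 1) :
    PhiT x * PhiT (-x) = PhiT (-(x^2)) * PhiT (-(x^2)) := by
  have hxn : |(-x)| < 1 := by rwa [abs_neg]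
  have hx2 : |(-(x^2))| < 1 := by
    rw [abs_neg, abs_pow]
    exact pow_lt_one₀ (abs_nonneg x) hx two_ne_zero
  have h1 : PhiT x * PhiT (-x)
      = ∑' p : ℤ × ℤ, x ^ (p.1.natAbs^2) * (-x) ^ (p.2.natAbs^2) :=
    tsum_mul_tsum_of_summable_norm (summable_norm_PhiT hx) (summable_norm_PhiT hxn)
  have hsum : Summable fun p : ℤ × ℤ => x ^ (p.1.natAbs^2) * (-x) ^ (p.2.natAbs^2) :=
    summable_mul_of_summable_norm (f := fun n : ℤ => x ^ (n.natAbs^2))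
      (g := fun n : ℤ => (-x) ^ (n.natAbs^2)) (summable_norm_PhiT hx) (summable_norm_PhiT hxn)
  have hsplit := Summable.tsum_add_tsum_compl (s := evenS) (hsum.subtype _) (hsum.subtype _)
  have heven : ∑' (p : ↥evenS), x ^ ((p : ℤ×ℤ).1.natAbs^2) * (-x) ^ ((p : ℤ×ℤ).2.natAbs^2)
      = PhiT (-(x^2)) * PhiT (-(x^2)) := by
    rw [← eB.tsum_eq]
    have h2 := tsum_mul_tsum_of_summable_norm (summable_norm_PhiT hx2) (summable_norm_PhiT hx2)
    calc (∑' (q : ℤ × ℤ), x ^ (((eB q : ℤ×ℤ)).1.natAbs^2) * (-x) ^ (((eB q : ℤ×ℤ)).2.natAbs^2))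
        = ∑' (z : ℤ × ℤ), (-(x^2)) ^ (z.1.natAbs^2) * (-(x^2)) ^ (z.2.natAbs^2) :=
          tsum_congr fun q => B_inl x q.1 q.2
      _ = PhiT (-(x^2)) * PhiT (-(x^2)) := h2.symm
  have hodd : ∑' (p : ↥(evenSᶜ)), x ^ ((p : ℤ×ℤ).1.natAbs^2) * (-x) ^ ((p : ℤ×ℤ).2.natAbs^2)
      = 0 := by
    set g : ↥(evenSᶜ) → ℝ :=
      fun p => x ^ ((p : ℤ×ℤ).1.natAbs^2) * (-x) ^ ((p : ℤ×ℤ).2.natAbs^2) with hg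
    have h2 := swOdd.tsum_eq g
    have h3 : ∀ p : ↥(evenSᶜ), g (swOdd p) = -(g p) := by
      intro p
      exact B_odd_swap x p.2
    rw [tsum_congr h3, tsum_neg] at h2
    linarith
  rw [h1, ← hsplit, heven, hodd, add_zero]

lemma FT_sq {t : ℝ} (ht : |t| < 1) :
    FT t * FT t = 2 * (PhiT (-(t^8)) * GT (t^2)) := by
  have ht2 : |t^2| < 1 := by rw [abs_pow]; exact pow_lt_one₀ (abs_nonneg t) ht two_ne_zero
  have ht8 : |(-(t^8))| < 1 := by
    rw [abs_neg, abs_pow]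
    exact pow_lt_one₀ (abs_nonneg t) ht (by norm_num)
  have h1 : FT t * FT t
      = ∑' p : ℤ × ℤ, (chiZ p.1 * t ^ eE p.1) * (chiZ p.2 * t ^ eE p.2) :=
    tsum_mul_tsum_of_summable_norm (summable_norm_FT ht) (summable_norm_FT ht)
  have hsum : Summable fun p : ℤ × ℤ => (chiZ p.1 * t ^ eE p.1) * (chiZ p.2 * t ^ eE p.2) :=
    summable_mul_of_summable_norm (f := fun n : ℤ => chiZ n * t ^ eE n)
      (g := fun n : ℤ => chiZ n * t ^ eE n) (summable_norm_FT ht) (summable_norm_FT ht)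
  have hsplit := Summable.tsum_add_tsum_compl (s := sameS) (hsum.subtype _) (hsum.subtype _)
  have hsame : ∑' (p : ↥sameS),
      (chiZ (p : ℤ×ℤ).1 * t ^ eE (p : ℤ×ℤ).1) * (chiZ (p : ℤ×ℤ).2 * t ^ eE (p : ℤ×ℤ).2)
      = GT (t^2) * PhiT (-(t^8)) := by
    rw [← eF1.tsum_eq]
    have h2 := tsum_mul_tsum_of_summable_norm (summable_norm_GT ht2) (summable_norm_PhiT ht8)
    calc (∑' (q : ℤ × ℤ), (chiZ ((eF1 q : ℤ×ℤ)).1 * t ^ eE ((eF1 q : ℤ×ℤ)).1)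
            * (chiZ ((eF1 q : ℤ×ℤ)).2 * t ^ eE ((eF1 q : ℤ×ℤ)).2))
        = ∑' (z : ℤ × ℤ), (t^2) ^ eE z.1 * (-(t^8)) ^ (z.2.natAbs^2) :=
          tsum_congr fun q => F2_inl t q.1 q.2
      _ = GT (t^2) * PhiT (-(t^8)) := h2.symm
  have hopp : ∑' (p : ↥(sameSᶜ)),
      (chiZ (p : ℤ×ℤ).1 * t ^ eE (p : ℤ×ℤ).1) * (chiZ (p : ℤ×ℤ).2 * t ^ eE (p : ℤ×ℤ).2)
      = PhiT (-(t^8)) * GT (t^2) := by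
    rw [← eF2.tsum_eq]
    have h2 := tsum_mul_tsum_of_summable_norm (summable_norm_PhiT ht8) (summable_norm_GT ht2)
    calc (∑' (q : ℤ × ℤ), (chiZ ((eF2 q : ℤ×ℤ)).1 * t ^ eE ((eF2 q : ℤ×ℤ)).1)
            * (chiZ ((eF2 q : ℤ×ℤ)).2 * t ^ eE ((eF2 q : ℤ×ℤ)).2))
        = ∑' (z : ℤ × ℤ), (-(t^8)) ^ (z.1.natAbs^2) * (t^2) ^ eE z.2 :=
          tsum_congr fun q => F2_inr t q.1 q.2
      _ = PhiT (-(t^8)) * GT (t^2) := h2.symm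
  rw [h1, ← hsplit, hsame, hopp]
  ring


/-- summability of the main series -/
lemma summable_norm_fS {x : ℝ} (hx : |x| < 1) :
    Summable fun n : ℕ => ‖(-1 : ℝ) ^ (n * (n + 1) / 2) * x ^ ((2 * n + 1) ^ 2)‖ := by
  refine Summable.of_nonneg_of_le (fun n => norm_nonneg _) (fun n => ?_)
    (summable_geometric_of_lt_one (abs_nonneg x) hx)
  rw [Real.norm_eq_abs, abs_mul, abs_pow, abs_pow, abs_neg, abs_one, one_pow, one_mul]
  exact pow_le_pow_of_le_one (abs_nonneg x) hx.le (by nlinarith)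

lemma summable_fS {x : ℝ} (hx : |x| < 1) :
    Summable fun n : ℕ => (-1 : ℝ) ^ (n * (n + 1) / 2) * x ^ ((2 * n + 1) ^ 2) :=
  (summable_norm_fS hx).of_norm

/-- FT = 2 fS -/
lemma FT_eq {x : ℝ} (hx : |x| < 1) : FT x = 2 * fS x := by
  have hterm1 : ∀ n : ℕ, chiZ (n : ℤ) * x ^ eE (n : ℤ)
      = (-1 : ℝ) ^ (n * (n + 1) / 2) * x ^ ((2 * n + 1) ^ 2) := by
    intro n
    have h1 : eE (n : ℤ) = (2 * n + 1) ^ 2 := by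
      unfold eE
      have : (2 * (n:ℤ) + 1).natAbs = 2 * n + 1 := by omega
      rw [this]
    have h2 : chiZ (n : ℤ) = (-1 : ℝ) ^ (n * (n + 1) / 2) := by
      unfold chiZ
      rw [← zpow_natCast (-1 : ℝ) (n * (n + 1) / 2)]
      congr 1
    rw [h1, h2]
  have hterm2 : ∀ n : ℕ, chiZ (-((n : ℤ) + 1)) * x ^ eE (-((n : ℤ) + 1))
      = (-1 : ℝ) ^ (n * (n + 1) / 2) * x ^ ((2 * n + 1) ^ 2) := by
    intro n
    have h1 : eE (-((n : ℤ) + 1)) = (2 * n + 1) ^ 2 := by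
      unfold eE
      have : (2 * (-((n:ℤ) + 1)) + 1).natAbs = 2 * n + 1 := by omega
      rw [this]
    have h2 : chiZ (-((n : ℤ) + 1)) = (-1 : ℝ) ^ (n * (n + 1) / 2) := by
      unfold chiZ
      have h3 : (-((n:ℤ) + 1)) * ((-((n:ℤ) + 1)) + 1) = (n : ℤ) * ((n : ℤ) + 1) := by ring
      rw [h3, ← zpow_natCast (-1 : ℝ) (n * (n + 1) / 2)]
      congr 1
    rw [h1, h2]
  have hs1 : Summable fun n : ℕ => chiZ (n : ℤ) * x ^ eE (n : ℤ) := by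
    apply Summable.congr (summable_fS hx)
    intro n; exact (hterm1 n).symm
  have hs2 : Summable fun n : ℕ => chiZ (-((n:ℤ) + 1)) * x ^ eE (-((n:ℤ) + 1)) := by
    apply Summable.congr (summable_fS hx)
    intro n; exact (hterm2 n).symm
  unfold FT
  rw [tsum_of_nat_of_neg_add_one (f := fun n : ℤ => chiZ n * x ^ eE n) hs1 hs2,
    tsum_congr hterm1, tsum_congr hterm2]
  unfold fS
  ring

/-- small-argument positivity of fS -/
lemma fS_pos_small {s : ℝ} (h0 : 0 < s) (h1 : s ≤ 1/2) : 0 < fS s := by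
  have hs1 : |s| < 1 := by rw [abs_of_pos h0]; linarith
  have h8 : s ^ 8 < 1 := by nlinarith [pow_le_pow_left₀ h0.le h1 8]
  have h80 : 0 ≤ s ^ 8 := by positivity
  have hsum := summable_fS hs1
  have hsplit := Summable.tsum_eq_zero_add hsum
  have hfirst : (-1 : ℝ) ^ (0 * (0 + 1) / 2) * s ^ ((2 * 0 + 1) ^ 2) = s := by norm_num
  -- tail bound
  have htail_sum : Summable fun n : ℕ => s ^ (8 * n + 9) := by
    apply Summable.congr ((summable_geometric_of_lt_one h80 h8).mul_left (s ^ 9))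
    intro n
    rw [← pow_mul, ← pow_add]
    ring_nf
  have htail_norm : Summable fun n : ℕ =>
      ‖(-1 : ℝ) ^ ((n+1) * ((n+1) + 1) / 2) * s ^ ((2 * (n+1) + 1) ^ 2)‖ :=
    (summable_norm_fS hs1).comp_injective (add_left_injective 1)
  have hbound : ∀ n : ℕ,
      ‖(-1 : ℝ) ^ ((n+1) * ((n+1) + 1) / 2) * s ^ ((2 * (n+1) + 1) ^ 2)‖ ≤ s ^ (8 * n + 9) := by
    intro n
    rw [Real.norm_eq_abs, abs_mul, abs_pow, abs_pow, abs_neg, abs_one, one_pow, one_mul,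
      abs_of_pos h0]
    exact pow_le_pow_of_le_one h0.le (by linarith) (by nlinarith)
  have habs : |∑' n : ℕ, (-1 : ℝ) ^ ((n+1) * ((n+1) + 1) / 2) * s ^ ((2 * (n+1) + 1) ^ 2)|
      ≤ ∑' n : ℕ, s ^ (8 * n + 9) := by
    calc |∑' n : ℕ, (-1 : ℝ) ^ ((n+1) * ((n+1) + 1) / 2) * s ^ ((2 * (n+1) + 1) ^ 2)|
        ≤ ∑' n : ℕ, ‖(-1 : ℝ) ^ ((n+1) * ((n+1) + 1) / 2) * s ^ ((2 * (n+1) + 1) ^ 2)‖ :=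
          norm_tsum_le_tsum_norm htail_norm
      _ ≤ ∑' n : ℕ, s ^ (8 * n + 9) := Summable.tsum_le_tsum hbound htail_norm htail_sum
  have hgeom : ∑' n : ℕ, s ^ (8 * n + 9) = s ^ 9 * (1 - s ^ 8)⁻¹ := by
    have : ∀ n : ℕ, s ^ (8 * n + 9) = s ^ 9 * (s ^ 8) ^ n := by
      intro n; rw [← pow_mul, ← pow_add]; ring_nf
    rw [tsum_congr this, tsum_mul_left, tsum_geometric_of_lt_one h80 h8]
  rw [hgeom] at habs
  have hkey : s ^ 9 * (1 - s ^ 8)⁻¹ < s := by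
    rw [mul_inv_lt_iff₀ (by linarith)]
    have : s ^ 8 ≤ (1/2 : ℝ) ^ 8 := pow_le_pow_left₀ h0.le h1 8
    nlinarith
  unfold fS
  rw [hsplit, hfirst]
  have := abs_le.mp habs
  linarith [this.1]

/-- positivity of PhiT at nonnegative arguments -/
lemma PhiT_pos_nonneg {x : ℝ} (h0 : 0 ≤ x) (h1 : x < 1) : 0 < PhiT x := by
  have hx : |x| < 1 := by rwa [abs_of_nonneg h0]
  refine Summable.tsum_pos (summable_PhiT hx) (fun n => pow_nonneg h0 _) 0 ?_
  norm_num

/-- positivity of GT -/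
lemma GT_pos {x : ℝ} (h0 : 0 < x) (h1 : x < 1) : 0 < GT x := by
  have hx : |x| < 1 := by rw [abs_of_pos h0]; exact h1
  refine Summable.tsum_pos (summable_GT hx) (fun n => pow_nonneg h0.le _) 0 ?_
  exact pow_pos h0 _

/-- small-argument positivity of PhiT(-q) -/
lemma PhiT_neg_small {q : ℝ} (h0 : 0 ≤ q) (h1 : q < 1/3) : 0 < PhiT (-q) := by
  have hq1 : q < 1 := by linarith
  have hx : |(-q)| < 1 := by rw [abs_neg, abs_of_nonneg h0]; exact hq1
  have hsum := summable_PhiT hx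
  have hs1 : Summable fun n : ℕ => (-q) ^ ((n : ℤ).natAbs ^ 2) := by
    exact hsum.comp_injective Nat.cast_injective
  have hs2 : Summable fun n : ℕ => (-q) ^ ((-((n:ℤ) + 1)).natAbs ^ 2) := by
    apply hsum.comp_injective
    intro a b hab
    simpa using hab
  unfold PhiT
  rw [tsum_of_nat_of_neg_add_one (f := fun n : ℤ => (-q) ^ (n.natAbs ^ 2)) hs1 hs2]
  have he1 : ∀ n : ℕ, ((n : ℤ)).natAbs = n := fun n => rfl
  have he2 : ∀ n : ℕ, ((-((n:ℤ) + 1))).natAbs = n + 1 := by intro n; omega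
  have hr1 : ∑' n : ℕ, (-q) ^ ((n : ℤ).natAbs ^ 2)
      = 1 + ∑' n : ℕ, (-q) ^ ((n+1) ^ 2) := by
    have : ∀ n : ℕ, (-q) ^ ((n : ℤ).natAbs ^ 2) = (-q) ^ (n ^ 2) := fun n => by rw [he1]
    rw [tsum_congr this, Summable.tsum_eq_zero_add (by
      apply Summable.congr hs1
      intro n; rw [he1])]
    norm_num
  have hr2 : ∑' n : ℕ, (-q) ^ ((-((n:ℤ) + 1)).natAbs ^ 2)
      = ∑' n : ℕ, (-q) ^ ((n+1) ^ 2) := by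
    apply tsum_congr; intro n; rw [he2]
  rw [hr1, hr2]
  -- bound S
  have hSsum : Summable fun n : ℕ => (-q) ^ ((n+1) ^ 2) := by
    apply Summable.congr hs2
    intro n; rw [he2]
  have hSnorm : Summable fun n : ℕ => ‖(-q) ^ ((n+1) ^ 2)‖ := by
    refine Summable.of_nonneg_of_le (fun n => norm_nonneg _) (fun n => ?_)
      ((summable_geometric_of_lt_one h0 hq1).mul_left q)
    rw [Real.norm_eq_abs, abs_pow, abs_neg, abs_of_nonneg h0]
    calc q ^ ((n+1)^2) ≤ q ^ (n + 1) := pow_le_pow_of_le_one h0 hq1.le (by nlinarith)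
      _ = q * q ^ n := by rw [pow_succ]; ring
  have habs : |∑' n : ℕ, (-q) ^ ((n+1) ^ 2)| ≤ q * (1 - q)⁻¹ := by
    calc |∑' n : ℕ, (-q) ^ ((n+1) ^ 2)| ≤ ∑' n : ℕ, ‖(-q) ^ ((n+1) ^ 2)‖ :=
          norm_tsum_le_tsum_norm hSnorm
      _ ≤ ∑' n : ℕ, q * q ^ n := by
          refine Summable.tsum_le_tsum (fun n => ?_) hSnorm
            ((summable_geometric_of_lt_one h0 hq1).mul_left q)
          rw [Real.norm_eq_abs, abs_pow, abs_neg, abs_of_nonneg h0]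
          calc q ^ ((n+1)^2) ≤ q ^ (n + 1) := pow_le_pow_of_le_one h0 hq1.le (by nlinarith)
            _ = q * q ^ n := by rw [pow_succ]; ring
      _ = q * (1 - q)⁻¹ := by rw [tsum_mul_left, tsum_geometric_of_lt_one h0 hq1]
  have hq23 : q * (1 - q)⁻¹ < 1/2 := by
    rw [mul_inv_lt_iff₀ (by linarith)]
    linarith
  have := abs_le.mp habs
  linarith [this.1]

/-- full positivity of PhiT(-q) -/
lemma PhiT_neg_pos {q : ℝ} (h0 : 0 ≤ q) (h1 : q < 1) : 0 < PhiT (-q) := by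
  obtain ⟨k, hk⟩ := exists_pow_lt_of_lt_one (show (0:ℝ) < 1/3 by norm_num) h1
  have hk2 : q ^ (2 ^ k) < 1/3 :=
    lt_of_le_of_lt (pow_le_pow_of_le_one h0 h1.le (Nat.le_of_lt (Nat.lt_two_pow_self (n := k)))) hk
  clear hk
  induction k generalizing q with
  | zero =>
      norm_num at hk2
      exact PhiT_neg_small h0 hk2
  | succ k ih =>
      have hq2 : (q^2) ^ (2^k) < 1/3 := by
        rw [← pow_mul]
        calc q ^ (2 * 2^k) = q ^ (2^(k+1)) := by ring_nf
          _ < 1/3 := hk2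
      have h20 : (0:ℝ) ≤ q^2 := sq_nonneg q
      have h21 : q^2 < 1 := by nlinarith
      have hPhi2 : 0 < PhiT (-(q^2)) := ih h20 h21 hq2
      have hq0 : 0 < PhiT q := PhiT_pos_nonneg h0 h1
      have hB := PhiB (x := q) (by rwa [abs_of_nonneg h0])
      nlinarith [hB, hq0, hPhi2]


lemma fS_contOn {r : ℝ} (h0 : 0 ≤ r) (h1 : r < 1) : ContinuousOn fS (Set.Icc 0 r) := by
  unfold fS
  refine continuousOn_tsum (u := fun n : ℕ => r ^ (2 * n + 1)) (fun i => ?_) ?_ ?_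
  · exact (Continuous.mul continuous_const (continuous_pow _)).continuousOn
  · apply Summable.congr
      (((summable_geometric_of_lt_one (r := r^2) (by positivity) (by nlinarith)).mul_left r))
    intro n
    rw [← pow_mul, ← pow_succ']
  · intro n x hx
    rw [Real.norm_eq_abs, abs_mul, abs_pow, abs_pow, abs_neg, abs_one, one_pow, one_mul]
    calc |x| ^ ((2*n+1)^2) ≤ r ^ ((2*n+1)^2) := by
          apply pow_le_pow_left₀ (abs_nonneg x)
          rw [abs_of_nonneg hx.1]; exact hx.2
      _ ≤ r ^ (2*n+1) := pow_le_pow_of_le_one h0 h1.le (by nlinarith)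

lemma fS_ne_zero {s : ℝ} (hs0 : 0 < s) (hs1 : s < 1) : fS s ≠ 0 := by
  have hs : |s| < 1 := by rw [abs_of_pos hs0]; exact hs1
  have hPhi : 0 < PhiT (-(s^8)) :=
    PhiT_neg_pos (by positivity) (pow_lt_one₀ hs0.le hs1 (by norm_num))
  have hG : 0 < GT (s^2) := GT_pos (by positivity) (pow_lt_one₀ hs0.le hs1 two_ne_zero)
  have hFT := FT_sq hs
  have hFe := FT_eq hs
  intro h0
  rw [hFe, h0] at hFT
  nlinarith

theorem theta1_value_positive (t : ℝ) (ht : 0 < t) (ht1 : t < 1) :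
    0 < ∑' n : ℕ, (-1 : ℝ) ^ (n * (n + 1) / 2) * t ^ ((2 * n + 1) ^ 2) := by
  show 0 < fS t
  rcases le_or_gt t (1/2) with h | h
  · exact fS_pos_small ht h
  · have hc : ContinuousOn fS (Set.Icc (1/2) t) :=
      (fS_contOn ht.le ht1).mono (Set.Icc_subset_Icc (by norm_num) le_rfl)
    by_contra hle
    push_neg at hle
    have hlt : fS t < 0 := lt_of_le_of_ne hle (fS_ne_zero ht ht1)
    have hImg := intermediate_value_Icc' h.le hc
    have h0mem : (0:ℝ) ∈ Set.Icc (fS t) (fS (1/2)) :=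
      ⟨hlt.le, (fS_pos_small (by norm_num) le_rfl).le⟩
    obtain ⟨c, hc1, hc2⟩ := hImg h0mem
    exact fS_ne_zero (lt_of_lt_of_le (by norm_num) hc1.1) (lt_of_le_of_lt hc1.2 ht1) hc2


end Theta1Aux
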